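/- For the 2D heat kernel G(x,t) = (1/(4πt))e^{−|x|²/(4t)}, the matrix H(x,t) = ∫_t^∞ ∇²G(x,s) ds satisfies the closed-form identity H(x,t) = −(x⊗x/|x|²) G(x,t) + (x⊗x/|x|² − 𝕀/2) (1 − e^{−|x|²/(4t)})/(π|x|²) for all x ≠ 0, t > 0. -/

import Mathlib

open Real Set MeasureTheory

noncomputable def pd (i : Fin 2) (f : (Fin 2 → ℝ) → ℝ) (x : Fin 2 → ℝ) : ℝ :=
  fderiv ℝ f x (Pi.single i 1)

def nsq (x : Fin 2 → ℝ) : ℝ := x 0 ^ 2 + x 1 ^ 2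

/-- 2D heat kernel. -/
noncomputable def heatG (x : Fin 2 → ℝ) (t : ℝ) : ℝ :=
  1 / (4 * π * t) * Real.exp (-(nsq x) / (4 * t))

/-- Hessian entry `∂_i ∂_j G(·, s)` at `x`. -/
noncomputable def hessG (i j : Fin 2) (x : Fin 2 → ℝ) (s : ℝ) : ℝ :=
  pd i (fun z => pd j (fun w => heatG w s) z) x

noncomputable def p0 : (Fin 2 → ℝ) →L[ℝ] ℝ := ContinuousLinearMap.proj 0
noncomputable def pj (j : Fin 2) : (Fin 2 → ℝ) →L[ℝ] ℝ := ContinuousLinearMap.proj j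
noncomputable def p1 : (Fin 2 → ℝ) →L[ℝ] ℝ := ContinuousLinearMap.proj 1

noncomputable def heatDeriv (z : Fin 2 → ℝ) (s : ℝ) : (Fin 2 → ℝ) →L[ℝ] ℝ :=
  (-(heatG z s)/(2*s)) • ((z 0) • p0 + (z 1) • p1)

lemma hasFDerivAt_nsq (z : Fin 2 → ℝ) :
    HasFDerivAt nsq ((2*z 0) • p0 + (2*z 1) • p1) z := by
  have h0 : HasFDerivAt (fun w : Fin 2 → ℝ => w 0) p0 z := p0.hasFDerivAt
  have h1 : HasFDerivAt (fun w : Fin 2 → ℝ => w 1) p1 z := p1.hasFDerivAt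
  have h := (h0.mul h0).add (h1.mul h1)
  have hfun : nsq = fun w : Fin 2 → ℝ => w 0 * w 0 + w 1 * w 1 := by
    funext w; simp [nsq]; ring
  rw [hfun]
  refine h.congr_fderiv ?_
  module

lemma hasFDerivAt_heatG (s : ℝ) (hs : s ≠ 0) (z : Fin 2 → ℝ) :
    HasFDerivAt (fun w => heatG w s) (heatDeriv z s) z := by
  have hn := hasFDerivAt_nsq z
  have h := ((hn.const_mul (-(1/(4*s)))).exp.const_mul (1/(4*π*s)))
  have hfun : (fun w => heatG w s)
      = fun w => 1/(4*π*s) * Real.exp (-(1/(4*s)) * nsq w) := by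
    funext w
    rw [heatG]
    ring_nf
  rw [hfun]
  refine h.congr_fderiv ?_
  symm
  rw [heatDeriv]
  have harg : -(nsq z) / (4*s) = -(1/(4*s)) * nsq z := by ring
  rw [heatG, harg]
  set E := Real.exp (-(1/(4*s)) * nsq z)
  ext w
  simp [p0, p1]
  field_simp
  ring

lemma heatDeriv_apply (z : Fin 2 → ℝ) (s : ℝ) (j : Fin 2) :
    heatDeriv z s (Pi.single j 1) = -(z j)/(2*s) * heatG z s := by
  fin_cases j <;>
    simp [heatDeriv, p0, p1, Pi.single_apply] <;> ring

lemma pd_heatG (s : ℝ) (hs : s ≠ 0) (j : Fin 2) (z : Fin 2 → ℝ) :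
    pd j (fun w => heatG w s) z = -(z j)/(2*s) * heatG z s := by
  rw [pd, (hasFDerivAt_heatG s hs z).fderiv, heatDeriv_apply]

lemma hessG_eq (i j : Fin 2) (x : Fin 2 → ℝ) (s : ℝ) (hs : s ≠ 0) :
    hessG i j x s
      = (x i * x j / (4*s^2) - (if i = j then (1:ℝ) else 0)/(2*s)) * heatG x s := by
  have hfun : (fun z => pd j (fun w => heatG w s) z)
      = fun z => (-(1/(2*s)) * z j) * heatG z s := by
    funext z; rw [pd_heatG s hs]; ring
  rw [hessG, hfun]
  have hj : HasFDerivAt (fun z : Fin 2 → ℝ => z j) (pj j) x := (pj j).hasFDerivAt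
  have h := ((hj.const_mul (-(1/(2*s)))).mul (hasFDerivAt_heatG s hs x))
  rw [pd, HasFDerivAt.fderiv (f := fun z : Fin 2 → ℝ => (-(1/(2*s)) * z j) * heatG z s) h]
  simp only [ContinuousLinearMap.add_apply, ContinuousLinearMap.smul_apply,
    ContinuousLinearMap.proj_apply, smul_eq_mul, heatDeriv_apply, pj]
  have hij : (Pi.single i 1 : Fin 2 → ℝ) j = if i = j then (1:ℝ) else 0 := by
    simp [Pi.single_apply, eq_comm]
  rw [hij]
  by_cases hij2 : i = j <;> simp [hij2] <;> field_simp <;> ring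

lemma nsq_pos {x : Fin 2 → ℝ} (hx : x ≠ 0) : 0 < nsq x := by
  have h0 : 0 ≤ nsq x := by rw [nsq]; positivity
  rcases h0.lt_or_eq with h | h
  · exact h
  exfalso; apply hx
  rw [nsq] at h
  have h1 : x 0 = 0 := by
    have := sq_nonneg (x 1)
    have h2 : x 0 ^ 2 = 0 := le_antisymm (by linarith) (sq_nonneg _)
    exact pow_eq_zero_iff two_ne_zero |>.mp h2
  have h2 : x 1 = 0 := by
    have := sq_nonneg (x 0)
    have h2 : x 1 ^ 2 = 0 := le_antisymm (by linarith) (sq_nonneg _)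
    exact pow_eq_zero_iff two_ne_zero |>.mp h2
  funext k
  fin_cases k
  · simpa using h1
  · simpa using h2


/-- Closed form for `H(x,t) = ∫_t^∞ ∇²G(x,s) ds`:
`H = −(x⊗x/|x|²) G(x,t) + (x⊗x/|x|² − 𝕀/2)(1 − e^{−|x|²/(4t)})/(π|x|²)`,
with the integral converging absolutely for `x ≠ 0`, `t > 0`. -/
theorem H_closed_form (x : Fin 2 → ℝ) (hx : x ≠ 0) (t : ℝ) (ht : 0 < t) (i j : Fin 2) :
    IntegrableOn (fun s => hessG i j x s) (Set.Ioi t) ∧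
    ∫ s in Set.Ioi t, hessG i j x s
      = -(x i * x j / nsq x) * heatG x t
        + (x i * x j / nsq x - (if i = j then (1 : ℝ) else 0) / 2)
          * (1 - Real.exp (-(nsq x) / (4 * t))) / (π * nsq x) := by
  set Q : ℝ := nsq x with hQdef
  have hQ : 0 < Q := nsq_pos hx
  set a : ℝ := x i * x j with ha
  set d : ℝ := if i = j then (1:ℝ) else 0 with hd
  set E : ℝ → ℝ := fun s => Real.exp (-Q/4 * s⁻¹) with hE
  -- derivative of E
  have hEder : ∀ s : ℝ, s ≠ 0 → HasDerivAt E (E s * (Q/4 * (s^2)⁻¹)) s := by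
    intro s hs
    have h1 := ((hasDerivAt_inv hs).const_mul (-Q/4)).exp
    convert h1 using 1
    rw [hE]; ring
  have hEtop : Filter.Tendsto E Filter.atTop (nhds 1) := by
    have h1 : Filter.Tendsto (fun s : ℝ => -Q/4 * s⁻¹) Filter.atTop (nhds 0) := by
      simpa using tendsto_inv_atTop_zero.const_mul (-Q/4)
    exact (by simpa only [Real.exp_zero] using (Real.continuous_exp.tendsto 0).comp h1 :
      Filter.Tendsto (Real.exp ∘ fun s : ℝ => -Q/4 * s⁻¹) Filter.atTop (nhds 1))
  -- antiderivatives
  set g1 : ℝ → ℝ := fun s => 4/Q * (E s * s⁻¹) + 16/Q^2 * E s with hg1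
  set g2 : ℝ → ℝ := fun s => 4/Q * E s with hg2
  set ψ1 : ℝ → ℝ := fun s => E s * (s^3)⁻¹ with hψ1
  set ψ2 : ℝ → ℝ := fun s => E s * (s^2)⁻¹ with hψ2
  have hg1der : ∀ s ∈ Ioi t, HasDerivAt g1 (ψ1 s) s := by
    intro s hs
    have hs0 : s ≠ 0 := (ht.trans hs).ne'
    have h := (((hEder s hs0).mul (hasDerivAt_inv hs0)).const_mul (4/Q)).add
      ((hEder s hs0).const_mul (16/Q^2))
    refine HasDerivAt.congr_deriv (f := g1) h ?_
    symm
    rw [hψ1]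
    field_simp
    ring
  have hg2der : ∀ s ∈ Ioi t, HasDerivAt g2 (ψ2 s) s := by
    intro s hs
    have hs0 : s ≠ 0 := (ht.trans hs).ne'
    have h := (hEder s hs0).const_mul (4/Q)
    refine HasDerivAt.congr_deriv (f := g2) h ?_
    symm
    rw [hψ2]
    field_simp
  have hg1cont : ContinuousWithinAt g1 (Ici t) t := by
    have := (((hEder t ht.ne').mul (hasDerivAt_inv ht.ne')).const_mul (4/Q)).add
      ((hEder t ht.ne').const_mul (16/Q^2))
    exact this.continuousAt.continuousWithinAt
  have hg2cont : ContinuousWithinAt g2 (Ici t) t :=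
    ((hEder t ht.ne').const_mul (4/Q)).continuousAt.continuousWithinAt
  have hψ1pos : ∀ s ∈ Ioi t, 0 ≤ ψ1 s := by
    intro s hs
    have : 0 < s := ht.trans hs
    rw [hψ1]; positivity
  have hψ2pos : ∀ s ∈ Ioi t, 0 ≤ ψ2 s := by
    intro s hs
    have : 0 < s := ht.trans hs
    rw [hψ2]; positivity
  have hg1top : Filter.Tendsto g1 Filter.atTop (nhds (16/Q^2)) := by
    have h1 : Filter.Tendsto (fun s : ℝ => E s * s⁻¹) Filter.atTop (nhds 0) := by
      simpa using hEtop.mul tendsto_inv_atTop_zero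
    have := (h1.const_mul (4/Q)).add (hEtop.const_mul (16/Q^2))
    simpa using this
  have hg2top : Filter.Tendsto g2 Filter.atTop (nhds (4/Q)) := by
    simpa using hEtop.const_mul (4/Q)
  have hInt1 : IntegrableOn ψ1 (Ioi t) :=
    integrableOn_Ioi_deriv_of_nonneg hg1cont hg1der hψ1pos hg1top
  have hInt2 : IntegrableOn ψ2 (Ioi t) :=
    integrableOn_Ioi_deriv_of_nonneg hg2cont hg2der hψ2pos hg2top
  have hI1 : ∫ s in Ioi t, ψ1 s = 16/Q^2 - g1 t :=
    integral_Ioi_of_hasDerivAt_of_nonneg hg1cont hg1der hψ1pos hg1top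
  have hI2 : ∫ s in Ioi t, ψ2 s = 4/Q - g2 t :=
    integral_Ioi_of_hasDerivAt_of_nonneg hg2cont hg2der hψ2pos hg2top
  -- pointwise identity for the integrand
  have hEq : EqOn (fun s => a/(16*π) * ψ1 s - d/(8*π) * ψ2 s)
      (fun s => hessG i j x s) (Ioi t) := by
    intro s hs
    have hs0 : (0:ℝ) < s := ht.trans hs
    have harg : -Q/4 * s⁻¹ = -(nsq x)/(4*s) := by rw [hQdef]; field_simp
    simp only [hessG_eq i j x s hs0.ne', heatG, hψ1, hψ2, hE, harg]
    rw [← hd]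
    have hπ := Real.pi_ne_zero
    field_simp
    ring
  have hcomb : IntegrableOn (fun s => a/(16*π) * ψ1 s - d/(8*π) * ψ2 s) (Ioi t) :=
    (hInt1.const_mul _).sub (hInt2.const_mul _)
  constructor
  · exact hcomb.congr_fun hEq measurableSet_Ioi
  · rw [← setIntegral_congr_fun measurableSet_Ioi hEq]
    rw [integral_sub (hInt1.const_mul _) (hInt2.const_mul _)]
    rw [integral_const_mul, integral_const_mul, hI1, hI2]
    have hEt : Real.exp (-(nsq x)/(4*t)) = E t := by
      rw [hE, hQdef]; congr 1; field_simp
    rw [hEt, heatG, hEt, hg1, hg2]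
    have hπ := Real.pi_ne_zero
    rw [hQdef] at hQ ⊢
    field_simp
    ring
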